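/- Fix a real number γ and an integer ℓ ≥ 1. Let r₁,…,r_ℓ and s₁,…,s_{ℓ−1} be points in ℝ², let τ ≥ 0 be a real number (the current waiting time of the last request r_ℓ, i.e. the TA-plane distance to its moving virtual server), and let y₁,…,y_ℓ, w₁,…,w_{ℓ−1}, w̃ be real numbers satisfying: (i) y_k + w_k ≤ γ·D(r_k, s_k) for every 1 ≤ k ≤ ℓ−1; (ii) w_k + y_{k+1} = D(s_k, r_{k+1}) for every 1 ≤ k ≤ ℓ−1; (iii) y_ℓ + w̃ ≤ γ·τ; (iv) y₁ = 0 and w̃ = 0. Then γ·τ + γ·Σ_{k=1}^{ℓ−1} D(r_k, s_k) − Σ_{k=1}^{ℓ−1} D(s_k, r_{k+1}) ≥ 0. -/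

import Mathlib

open Finset

/-- ℓ1 distance in the time-augmented (TA) plane. -/
def taDist (p q : ℝ × ℝ) : ℝ := |p.1 - q.1| + |p.2 - q.2|

/-- Lemma 3.3 (virtualgeq0): a virtual augmenting path, ending with the edge of
length τ (the last request's waiting time) to its moving virtual server, has
nonnegative γ-net-cost under the dual invariants. -/
theorem virtualPath_netCost_nonneg (γ : ℝ) (ℓ : ℕ) (hℓ : 1 ≤ ℓ)
    (r s : ℕ → ℝ × ℝ) (τ : ℝ) (hτ : 0 ≤ τ)
    (y w : ℕ → ℝ) (wt : ℝ)
    (h1 : ∀ k, k < ℓ - 1 → y k + w k ≤ γ * taDist (r k) (s k))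
    (h2 : ∀ k, k + 1 < ℓ → w k + y (k + 1) = taDist (s k) (r (k + 1)))
    (h3 : y (ℓ - 1) + wt ≤ γ * τ)
    (h4 : y 0 = 0) (h5 : wt = 0) :
    0 ≤ γ * τ + γ * ∑ k ∈ range (ℓ - 1), taDist (r k) (s k)
        - ∑ k ∈ range (ℓ - 1), taDist (s k) (r (k + 1)) := by
  have hA : ∑ k ∈ range (ℓ - 1), (y k + w k) ≤ γ * ∑ k ∈ range (ℓ - 1), taDist (r k) (s k) := by
    rw [Finset.mul_sum]
    exact Finset.sum_le_sum fun k hk => h1 k (mem_range.mp hk)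
  have hB : ∑ k ∈ range (ℓ - 1), taDist (s k) (r (k + 1))
      = ∑ k ∈ range (ℓ - 1), (w k + y (k + 1)) := by
    refine Finset.sum_congr rfl fun k hk => ?_
    exact (h2 k (by have := mem_range.mp hk; omega) ).symm
  have hT : ∑ k ∈ range (ℓ - 1), (y k + w k) - ∑ k ∈ range (ℓ - 1), (w k + y (k + 1))
      = y 0 - y (ℓ - 1) := by
    rw [← Finset.sum_sub_distrib]
    have : ∀ k ∈ range (ℓ - 1), (y k + w k) - (w k + y (k + 1)) = y k - y (k + 1) := by
      intro k _; ring
    rw [Finset.sum_congr rfl this, Finset.sum_range_sub' (fun k => y k)]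
  have := h3
  rw [h5, add_zero] at this
  linarith
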